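/- arXiv:2206.09159 — 2 statements merged into one kernel-verified Lean document; each statement's English description precedes it below -/
import Mathlib

section
/- (Dishonest initial primary: identical root gathering lists.) Assume n >= 2f+1, the set D of dishonest players has exactly f elements, and the initial primary S is dishonest. Then for every adversary assignment (w, u) satisfying (A1)-(A4) and any two honest players i, i' distinct from S, the depth-1 gathering lists of i and i' agree entrywise: for every player j ∉ {S, i, i'} one has g([S, j], i) = g([S, j], i'), and moreover g([S, i], i') = w([S], i) and g([S, i'], i) = w([S], i'). Consequently all honest players output the same value g([S], i) = g([S], i'). -/
namespace QBA

/-- The majority function: returns the element of `M` occurring most often in `L`,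
with ties broken by taking the least such element in the linear order,
and returning the default `d` on the empty list. -/
def maj {M : Type*} [LinearOrder M] (d : M) (L : List M) : M :=
  let s := L.toFinset.filter fun m => ∀ m' ∈ L.toFinset, L.count m' ≤ L.count m
  if h : s.Nonempty then s.min' h else d

/-- A route: a list of pairwise distinct players with head `S`
and length (depth) between `1` and `f`.  Its primary is its last entry,
and its backups are the players not occurring in it. -/
def IsRoute (n f : ℕ) (S : Fin n) (ζ : List (Fin n)) : Prop :=
  ζ.Nodup ∧ ζ.head? = some S ∧ 1 ≤ ζ.length ∧ ζ.length ≤ f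

/-- The primary (last entry) of `ζ` is honest (not in `D`). -/
def HonestPrimary {n : ℕ} (D : Finset (Fin n)) (ζ : List (Fin n)) : Prop :=
  ∀ q ∈ ζ.getLast?, q ∉ D

/-- An adversary assignment `(w, u)`: `w ζ i` is the message backup `i` accepts from
`ζ`'s primary, `u ζ j i` the message forwarder `j` forwards to verifier `i`,
subject to conditions (A1)–(A4). -/
structure Adversary (n f : ℕ) (S : Fin n) (D : Finset (Fin n)) (M : Type*) where
  w : List (Fin n) → Fin n → M
  u : List (Fin n) → Fin n → Fin n → M
  A1 : ∀ ζ : List (Fin n), IsRoute n f S ζ → HonestPrimary D ζ →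
    ∀ i i' : Fin n, i ∉ ζ → i' ∉ ζ → w ζ i = w ζ i'
  A2 : ∀ (ζ : List (Fin n)) (p : Fin n), IsRoute n f S ζ → p ∉ ζ → p ∉ D →
    IsRoute n f S (ζ ++ [p]) → ∀ i : Fin n, i ∉ ζ ++ [p] → w (ζ ++ [p]) i = w ζ p
  A3 : ∀ (ζ : List (Fin n)) (p : Fin n), IsRoute n f S ζ → HonestPrimary D ζ →
    p ∉ ζ → p ∈ D → IsRoute n f S (ζ ++ [p]) →
    ∀ i : Fin n, i ∉ ζ ++ [p] → i ∉ D → w (ζ ++ [p]) i = w ζ p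
  A4 : ∀ (ζ : List (Fin n)) (j i : Fin n), IsRoute n f S ζ → j ∉ ζ → i ∉ ζ → i ≠ j →
    (j ∉ D ∨ HonestPrimary D ζ) → u ζ j i = w ζ j

/-- Fuel-indexed gathering value; for a route `ζ` the fuel is `f - ζ.length`, so fuel `0`
corresponds to the bottom layer `ζ.length = f`. -/
def gAux {n f : ℕ} {S : Fin n} {D : Finset (Fin n)} {M : Type*} [LinearOrder M] [Inhabited M]
    (A : Adversary n f S D M) : ℕ → List (Fin n) → Fin n → M
  | 0, ζ, i =>
      maj default (A.w ζ i ::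
        (((List.finRange n).filter fun j => decide (j ∉ ζ ∧ j ≠ i)).map fun j => A.u ζ j i))
  | k + 1, ζ, i =>
      maj default (((List.finRange n).filter fun j => decide (j ∉ ζ)).map
        fun j => if j = i then A.w ζ i else gAux A k (ζ ++ [j]) i)

/-- The gathering value `g(ζ, i)` of an honest backup `i` of the route `ζ`,
defined by downward recursion on depth: at the bottom layer `ζ.length = f` it is the
majority of `w(ζ, i)` together with `u(ζ, j, i)` over all backups `j ≠ i` of `ζ`;
above the bottom layer it is the majority, over all backups `j` of `ζ`, of
`g(ζ ++ [j], i)` (where the `j = i` entry is `w(ζ, i)`). -/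
def g {n f : ℕ} {S : Fin n} {D : Finset (Fin n)} {M : Type*} [LinearOrder M] [Inhabited M]
    (A : Adversary n f S D M) (ζ : List (Fin n)) (i : Fin n) : M :=
  gAux A (f - ζ.length) ζ i

section Helpers

variable {M : Type*} [LinearOrder M]

lemma maj_eq_of_lt_two_mul_count (d : M) {L : List M} {v : M}
    (h : L.length < 2 * L.count v) : maj d L = v := by
  classical
  have hvL : v ∈ L := by
    by_contra hv
    have : L.count v = 0 := List.count_eq_zero.mpr hv
    omega
  have hkey : ∀ m : M, m ≠ v → L.count m < L.count v := by
    intro m hm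
    have h1 : L.count m ≤ L.countP (fun a => !(a == v)) := by
      rw [List.count_eq_countP]
      refine List.countP_mono_left ?_
      intro a ha hav
      simp only [beq_iff_eq] at hav ⊢
      subst hav
      simpa using hm
    have h2 : L.length = L.countP (fun a => a == v) + L.countP (fun a => !(a == v)) := by
      rw [L.length_eq_countP_add_countP (fun a => a == v)]
      congr 1
      exact List.countP_congr (fun x _ => by simp)
    have h3 : L.count v = L.countP (fun a => a == v) := List.count_eq_countP ..
    omega
  have hs : (L.toFinset.filter fun m => ∀ m' ∈ L.toFinset, L.count m' ≤ L.count m) = {v} := by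
    ext m
    simp only [Finset.mem_filter, List.mem_toFinset, Finset.mem_singleton]
    constructor
    · rintro ⟨hm, hall⟩
      by_contra hmv
      exact absurd (hall v hvL) (by have := hkey m hmv; omega)
    · intro hmv
      refine ⟨hmv ▸ hvL, fun m' hm' => ?_⟩
      by_cases hm'v : m' = v
      · simp [hm'v, hmv]
      · calc L.count m' ≤ L.count v := (hkey m' hm'v).le
          _ = L.count m := by rw [hmv]
  rw [maj]
  simp only [hs]
  rw [dif_pos ⟨v, by simp⟩]
  exact Finset.min'_singleton v

lemma maj_all (d : M) {L : List M} {v : M} (hne : L ≠ [])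
    (hall : ∀ x ∈ L, x = v) : maj d L = v := by
  apply maj_eq_of_lt_two_mul_count
  have h1 : L.count v = L.length := List.count_eq_length.mpr (by intro b hb; simpa using (hall b hb).symm)
  have h2 : 0 < L.length := List.length_pos_iff.mpr hne
  omega

lemma maj_perm (d : M) {L₁ L₂ : List M} (h : L₁.Perm L₂) : maj d L₁ = maj d L₂ := by
  have ht : L₁.toFinset = L₂.toFinset := by ext a; simp [h.mem_iff]
  have hc : ∀ m, L₁.count m = L₂.count m := fun m => h.count_eq m
  rw [maj, maj]
  simp only [ht, hc]

lemma count_map_ge {α : Type*} (l : List α) (F : α → M) (good : α → Bool) (v : M)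
    (h : ∀ j ∈ l, good j = true → F j = v) : l.countP good ≤ (l.map F).count v := by
  rw [List.count_eq_countP, List.countP_map]
  refine List.countP_mono_left ?_
  intro a ha hg
  simp only [Function.comp, beq_iff_eq]
  exact h a ha hg

variable {n f : ℕ} {S : Fin n} {D : Finset (Fin n)}

lemma length_filter_finRange (p : Fin n → Bool) :
    ((List.finRange n).filter p).length = (Finset.univ.filter fun j => p j = true).card := by
  classical
  have hn : ((List.finRange n).filter p).Nodup := (List.nodup_finRange n).filter p
  rw [← List.toFinset_card_of_nodup hn, List.toFinset_filter, List.toFinset_finRange]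

lemma countP_filter_eq_card (p q : Fin n → Bool) :
    List.countP q ((List.finRange n).filter p)
      = (Finset.univ.filter fun j => p j = true ∧ q j = true).card := by
  classical
  rw [List.countP_eq_length_filter, List.filter_filter, length_filter_finRange]
  congr 1
  apply Finset.filter_congr
  intro j _
  simp [Bool.and_eq_true, and_comm]

lemma route_cons {ζ : List (Fin n)} (h : IsRoute n f S ζ) : ∃ t, ζ = S :: t := by
  obtain ⟨-, h2, -, -⟩ := h
  cases ζ with
  | nil => simp at h2
  | cons a t => simp only [List.head?_cons, Option.some.injEq] at h2; exact ⟨t, by rw [h2]⟩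

lemma route_extend {ζ : List (Fin n)} {j : Fin n} (h : IsRoute n f S ζ)
    (hlt : ζ.length < f) (hj : j ∉ ζ) : IsRoute n f S (ζ ++ [j]) := by
  obtain ⟨hnd, hh, h1, h2⟩ := h
  refine ⟨?_, ?_, ?_, ?_⟩
  · simp only [List.nodup_append, List.nodup_cons, List.not_mem_nil, not_false_iff,
      List.nodup_nil, and_true, true_and]
    exact ⟨hnd, by simpa [List.disjoint_left] using (fun a ha h => hj (h ▸ ha) : ∀ a ∈ ζ, ¬a = j)⟩
  · cases ζ with
    | nil => simp at h1
    | cons a t => simpa using hh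
  · simp
  · simp; omega

lemma honestPrimary_concat {ζ : List (Fin n)} {j : Fin n} (hjD : j ∉ D) :
    HonestPrimary D (ζ ++ [j]) := by
  intro q hq
  rw [List.getLast?_concat] at hq
  simp only [Option.mem_def, Option.some.injEq] at hq
  exact hq ▸ hjD

lemma inter_concat_of_mem {ζ : List (Fin n)} {j : Fin n} (hjD : j ∈ D) :
    D ∩ (ζ ++ [j]).toFinset = insert j (D ∩ ζ.toFinset) := by
  ext x; simp only [Finset.mem_inter, List.toFinset_append, Finset.mem_union,
    List.mem_toFinset, Finset.mem_insert, List.toFinset_cons, List.toFinset_nil,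
    LawfulSingleton.insert_empty_eq, Finset.mem_singleton]
  constructor
  · rintro ⟨hx, hx2 | rfl⟩ <;> tauto
  · rintro (rfl | ⟨hx, hx2⟩) <;> tauto

lemma inter_concat_of_not_mem {ζ : List (Fin n)} {j : Fin n} (hjD : j ∉ D) :
    D ∩ (ζ ++ [j]).toFinset = D ∩ ζ.toFinset := by
  ext x; simp only [Finset.mem_inter, List.toFinset_append, Finset.mem_union,
    List.mem_toFinset, List.toFinset_cons, List.toFinset_nil, LawfulSingleton.insert_empty_eq,
    Finset.mem_singleton]
  constructor
  · rintro ⟨hx, hx2 | rfl⟩ <;> tauto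
  · rintro ⟨hx, hx2⟩; tauto

lemma card_bundle (ζ : List (Fin n)) (hnd : ζ.Nodup) :
    (D \ ζ.toFinset).card + ((Finset.univ \ ζ.toFinset) \ D).card
        = (Finset.univ \ ζ.toFinset).card
    ∧ (D ∩ ζ.toFinset).card + (D \ ζ.toFinset).card = D.card
    ∧ (Finset.univ \ ζ.toFinset).card + ζ.length = n := by
  refine ⟨?_, Finset.card_inter_add_card_sdiff _ _, ?_⟩
  · have h := Finset.card_inter_add_card_sdiff (Finset.univ \ ζ.toFinset) D
    have h2 : (Finset.univ \ ζ.toFinset) ∩ D = D \ ζ.toFinset := by ext x; simp [and_comm]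
    rw [h2] at h
    exact h
  · have := Finset.card_sdiff_add_card_eq_card (Finset.subset_univ ζ.toFinset)
    have h2 : ζ.toFinset.card = ζ.length := List.toFinset_card_of_nodup hnd
    simp only [Finset.card_univ, Fintype.card_fin] at this
    omega

end Helpers

section Main

variable {n f : ℕ} {S : Fin n} {D : Finset (Fin n)} {M : Type*} [LinearOrder M] [Inhabited M]

theorem mainPQ (hnf : 2 * f + 1 ≤ n) (hD : D.card = f) (A : Adversary n f S D M) :
    ∀ (k : ℕ) (ζ : List (Fin n)) (v : M), IsRoute n f S ζ → ζ.length + k = f →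
    (∀ m : Fin n, m ∉ ζ → m ∉ D → A.w ζ m = v) →
    ∀ i : Fin n, i ∉ ζ → i ∉ D →
    ((ζ.length + 2 * f + 1 ≤ 2 * (D ∩ ζ.toFinset).card + n → gAux A k ζ i = v)
     ∧ (HonestPrimary D ζ → ζ.length + 2 * f ≤ 2 * (D ∩ ζ.toFinset).card + n →
        gAux A k ζ i = v)) := by
  intro k
  induction k with
  | zero =>
    intro ζ v hroute hlen hpin i hiζ hiD
    obtain ⟨hcA, hcC, hcD⟩ := card_bundle (D := D) ζ hroute.1
    have hcT : (D ∩ ζ.toFinset).card ≤ D.card := Finset.card_le_card (Finset.inter_subset_left)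
    constructor
    · -- Q-part, bottom
      intro hcond
      show maj default (A.w ζ i ::
        (((List.finRange n).filter fun j => decide (j ∉ ζ ∧ j ≠ i)).map fun j => A.u ζ j i)) = v
      set l := ((List.finRange n).filter fun j => decide (j ∉ ζ ∧ j ≠ i)) with hl
      have hmem : ∀ j ∈ l, j ∉ ζ ∧ j ≠ i := by
        intro j hj
        have := (List.mem_filter.mp hj).2
        simpa using this
      have hgood : ∀ j ∈ l, (decide (j ∉ D)) = true → A.u ζ j i = v := by
        intro j hj hjD
        obtain ⟨hjζ, hjI⟩ := hmem j hj
        have hjD' : j ∉ D := of_decide_eq_true hjD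
        rw [A.A4 ζ j i hroute hjζ hiζ (Ne.symm hjI) (Or.inl hjD')]
        exact hpin j hjζ hjD'
      have hcnt := count_map_ge l (fun j => A.u ζ j i) (fun j => decide (j ∉ D)) v hgood
      have hcp : l.countP (fun j => decide (j ∉ D))
          = (((Finset.univ \ ζ.toFinset) \ D).erase i).card := by
        rw [hl, countP_filter_eq_card]
        congr 1
        ext x
        simp only [Finset.mem_filter, Finset.mem_univ, true_and, decide_eq_true_eq,
          Finset.mem_erase, Finset.mem_sdiff, List.mem_toFinset]
        tauto
      have hmemI : i ∈ (Finset.univ \ ζ.toFinset) \ D := by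
        simp [hiζ, hiD, List.mem_toFinset]
      have hcerase : (((Finset.univ \ ζ.toFinset) \ D).erase i).card
          = ((Finset.univ \ ζ.toFinset) \ D).card - 1 := Finset.card_erase_of_mem hmemI
      have hpos : 0 < ((Finset.univ \ ζ.toFinset) \ D).card := Finset.card_pos.mpr ⟨i, hmemI⟩
      have hlenl : l.length = ((Finset.univ \ ζ.toFinset).erase i).card := by
        rw [hl, length_filter_finRange]
        congr 1
        ext x
        simp only [Finset.mem_filter, Finset.mem_univ, true_and, decide_eq_true_eq,
          Finset.mem_erase, Finset.mem_sdiff, List.mem_toFinset]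
        tauto
      have hmemI2 : i ∈ Finset.univ \ ζ.toFinset := by simp [hiζ, List.mem_toFinset]
      have hcerase2 : ((Finset.univ \ ζ.toFinset).erase i).card
          = (Finset.univ \ ζ.toFinset).card - 1 := Finset.card_erase_of_mem hmemI2
      have hpos2 : 0 < (Finset.univ \ ζ.toFinset).card := Finset.card_pos.mpr ⟨i, hmemI2⟩
      apply maj_eq_of_lt_two_mul_count
      have hwv : A.w ζ i = v := hpin i hiζ hiD
      rw [hwv]
      rw [List.count_cons_self, List.length_cons, List.length_map]
      omega
    · -- P-part, bottom: everything equals v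
      intro hp _
      show maj default (A.w ζ i ::
        (((List.finRange n).filter fun j => decide (j ∉ ζ ∧ j ≠ i)).map fun j => A.u ζ j i)) = v
      apply maj_all
      · simp
      · intro x hx
        rcases List.mem_cons.mp hx with rfl | hx
        · exact hpin i hiζ hiD
        · obtain ⟨j, hj, rfl⟩ := List.mem_map.mp hx
          have hmem := (List.mem_filter.mp hj).2
          simp only [decide_eq_true_eq] at hmem
          obtain ⟨hjζ, hjI⟩ := hmem
          rw [A.A4 ζ j i hroute hjζ hiζ (Ne.symm hjI) (Or.inr hp)]
          by_cases hjD : j ∈ D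
          · rw [A.A1 ζ hroute hp j i hjζ hiζ]
            exact hpin i hiζ hiD
          · exact hpin j hjζ hjD
  | succ k ih =>
    intro ζ v hroute hlen hpin i hiζ hiD
    obtain ⟨hcA, hcC, hcD⟩ := card_bundle (D := D) ζ hroute.1
    have hcT : (D ∩ ζ.toFinset).card ≤ D.card := Finset.card_le_card (Finset.inter_subset_left)
    have hlt : ζ.length < f := by omega
    set l := ((List.finRange n).filter fun j => decide (j ∉ ζ)) with hl
    have hmem : ∀ j ∈ l, j ∉ ζ := by
      intro j hj
      have := (List.mem_filter.mp hj).2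
      simpa using this
    have hil : i ∈ l := by
      rw [hl]
      refine List.mem_filter.mpr ⟨List.mem_finRange i, by simpa using hiζ⟩
    -- honest child claim
    have claimH : ∀ j, j ∉ ζ → j ∉ D → j ≠ i →
        ζ.length + 2 * f + 1 ≤ 2 * (D ∩ ζ.toFinset).card + n →
        gAux A k (ζ ++ [j]) i = v := by
      intro j hjζ hjD hjI hcond
      have hroute' : IsRoute n f S (ζ ++ [j]) := route_extend hroute hlt hjζ
      have hiζ' : i ∉ ζ ++ [j] := by
        simp only [List.mem_append, List.mem_singleton]
        rintro (h | h)
        exacts [hiζ h, hjI h.symm]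
      have hpin' : ∀ m : Fin n, m ∉ ζ ++ [j] → m ∉ D → A.w (ζ ++ [j]) m = v := by
        intro m hm _
        rw [A.A2 ζ j hroute hjζ hjD hroute' m hm]
        exact hpin j hjζ hjD
      have := (ih (ζ ++ [j]) v hroute' (by simp at hlen ⊢; omega) hpin' i hiζ' hiD).2
        (honestPrimary_concat hjD)
      apply this
      rw [inter_concat_of_not_mem hjD]
      simp only [List.length_append, List.length_singleton]
      omega
    -- dishonest child claim (requires honest primary of ζ)
    have claimD : ∀ j, j ∉ ζ → j ∈ D → j ≠ i → HonestPrimary D ζ →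
        ζ.length + 2 * f ≤ 2 * (D ∩ ζ.toFinset).card + n →
        gAux A k (ζ ++ [j]) i = v := by
      intro j hjζ hjD hjI hp hcond
      have hroute' : IsRoute n f S (ζ ++ [j]) := route_extend hroute hlt hjζ
      have hiζ' : i ∉ ζ ++ [j] := by
        simp only [List.mem_append, List.mem_singleton]
        rintro (h | h)
        exacts [hiζ h, hjI h.symm]
      have hwj : A.w ζ j = v := by
        rw [A.A1 ζ hroute hp j i hjζ hiζ]
        exact hpin i hiζ hiD
      have hpin' : ∀ m : Fin n, m ∉ ζ ++ [j] → m ∉ D → A.w (ζ ++ [j]) m = v := by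
        intro m hm hmD
        rw [A.A3 ζ j hroute hp hjζ hjD hroute' m hm hmD]
        exact hwj
      have := (ih (ζ ++ [j]) v hroute' (by simp at hlen ⊢; omega) hpin' i hiζ' hiD).1
      apply this
      rw [inter_concat_of_mem hjD]
      have hjT : j ∉ D ∩ ζ.toFinset := by
        simp only [Finset.mem_inter, List.mem_toFinset, not_and]
        intro _; exact hjζ
      rw [Finset.card_insert_of_notMem hjT]
      simp only [List.length_append, List.length_singleton]
      omega
    have hlenl : l.length = (Finset.univ \ ζ.toFinset).card := by
      rw [hl, length_filter_finRange]
      congr 1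
      ext x
      simp only [Finset.mem_filter, Finset.mem_univ, true_and, decide_eq_true_eq,
        Finset.mem_sdiff, List.mem_toFinset]
    constructor
    · -- Q-part, intermediate
      intro hcond
      show maj default (l.map fun j => if j = i then A.w ζ i else gAux A k (ζ ++ [j]) i) = v
      have hgood : ∀ j ∈ l, (decide (j ∉ D)) = true →
          (if j = i then A.w ζ i else gAux A k (ζ ++ [j]) i) = v := by
        intro j hj hjD
        have hjD' : j ∉ D := of_decide_eq_true hjD
        by_cases hji : j = i
        · rw [if_pos hji]; exact hpin i hiζ hiD
        · rw [if_neg hji]; exact claimH j (hmem j hj) hjD' hji hcond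
      have hcnt := count_map_ge l _ (fun j => decide (j ∉ D)) v hgood
      have hcp : l.countP (fun j => decide (j ∉ D))
          = ((Finset.univ \ ζ.toFinset) \ D).card := by
        rw [hl, countP_filter_eq_card]
        congr 1
        ext x
        simp only [Finset.mem_filter, Finset.mem_univ, true_and, decide_eq_true_eq,
          Finset.mem_sdiff, List.mem_toFinset]
      apply maj_eq_of_lt_two_mul_count
      rw [List.length_map]
      omega
    · -- P-part, intermediate
      intro hp hcond
      show maj default (l.map fun j => if j = i then A.w ζ i else gAux A k (ζ ++ [j]) i) = v
      by_cases hc2 : ζ.length + 2 * f + 1 ≤ 2 * (D ∩ ζ.toFinset).card + n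
      · -- everything equals v
        apply maj_all
        · intro hLnil
          have : l = [] := by
            cases hll : l
            · rfl
            · rw [hll] at hLnil; simp at hLnil
          rw [this] at hil
          simp at hil
        · intro x hx
          obtain ⟨j, hj, rfl⟩ := List.mem_map.mp hx
          by_cases hji : j = i
          · rw [if_pos hji]; exact hpin i hiζ hiD
          · rw [if_neg hji]
            by_cases hjD : j ∈ D
            · exact claimD j (hmem j hj) hjD hji hp hcond
            · exact claimH j (hmem j hj) hjD hji hc2
      · -- boundary case: count dishonest children + self
        have hgood : ∀ j ∈ l, (decide (j ∈ D ∨ j = i)) = true →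
            (if j = i then A.w ζ i else gAux A k (ζ ++ [j]) i) = v := by
          intro j hj hjg
          have hjg' : j ∈ D ∨ j = i := of_decide_eq_true hjg
          by_cases hji : j = i
          · rw [if_pos hji]; exact hpin i hiζ hiD
          · rw [if_neg hji]
            rcases hjg' with hjD | h
            · exact claimD j (hmem j hj) hjD hji hp hcond
            · exact absurd h hji
        have hcnt := count_map_ge l _ (fun j => decide (j ∈ D ∨ j = i)) v hgood
        have hcp : l.countP (fun j => decide (j ∈ D ∨ j = i))
            = (insert i (D \ ζ.toFinset)).card := by
          rw [hl, countP_filter_eq_card]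
          congr 1
          ext x
          simp only [Finset.mem_filter, Finset.mem_univ, true_and, decide_eq_true_eq,
            Finset.mem_insert, Finset.mem_sdiff, List.mem_toFinset]
          constructor
          · rintro ⟨hx1, hx2 | rfl⟩ <;> tauto
          · rintro (rfl | ⟨hx1, hx2⟩) <;> tauto
        have hiDT : i ∉ D \ ζ.toFinset := by
          simp only [Finset.mem_sdiff, List.mem_toFinset, not_and]
          intro h; exact absurd h hiD
        rw [Finset.card_insert_of_notMem hiDT] at hcp
        apply maj_eq_of_lt_two_mul_count
        rw [List.length_map]
        omega

theorem mainS (hnf : 2 * f + 1 ≤ n) (hD : D.card = f) (A : Adversary n f S D M) :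
    ∀ (k : ℕ) (ζ : List (Fin n)), IsRoute n f S ζ → ζ.length + k = f →
    (∀ x ∈ ζ, x ∈ D) →
    ∀ i i' : Fin n, i ∉ ζ → i ∉ D → i' ∉ ζ → i' ∉ D →
    gAux A k ζ i = gAux A k ζ i' := by
  intro k
  induction k with
  | zero =>
    intro ζ hroute hlen hall i i' hiζ hiD hi'ζ hi'D
    have hsub : ζ.toFinset ⊆ D := fun x hx => hall x (List.mem_toFinset.mp hx)
    have hback : ∀ j : Fin n, j ∉ ζ → j ∉ D := by
      intro j hj hjD
      have hTeq : ζ.toFinset = D := by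
        apply Finset.eq_of_subset_of_card_le hsub
        rw [hD, List.toFinset_card_of_nodup hroute.1]
        omega
      exact hj (List.mem_toFinset.mp (by rw [hTeq]; exact hjD))
    have key : ∀ m : Fin n, m ∉ ζ → m ∉ D →
        gAux A 0 ζ m
          = maj default (((List.finRange n).filter fun j => decide (j ∉ ζ)).map (A.w ζ)) := by
      intro m hmζ hmD
      show maj default (A.w ζ m ::
        (((List.finRange n).filter fun j => decide (j ∉ ζ ∧ j ≠ m)).map fun j => A.u ζ j m)) = _
      have h1 : (((List.finRange n).filter fun j => decide (j ∉ ζ ∧ j ≠ m)).map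
            fun j => A.u ζ j m)
          = (((List.finRange n).filter fun j => decide (j ∉ ζ ∧ j ≠ m)).map (A.w ζ)) := by
        apply List.map_congr_left
        intro j hj
        have hmem := (List.mem_filter.mp hj).2
        simp only [decide_eq_true_eq] at hmem
        exact A.A4 ζ j m hroute hmem.1 hmζ (Ne.symm hmem.2) (Or.inl (hback j hmem.1))
      rw [h1]
      apply maj_perm
      set l := ((List.finRange n).filter fun j => decide (j ∉ ζ)) with hldef
      have hml : m ∈ l := List.mem_filter.mpr ⟨List.mem_finRange m, by simpa using hmζ⟩
      have hnodupl : l.Nodup := (List.nodup_finRange n).filter _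
      have herase : l.erase m
          = ((List.finRange n).filter fun j => decide (j ∉ ζ ∧ j ≠ m)) := by
        rw [hnodupl.erase_eq_filter, hldef, List.filter_filter]
        apply List.filter_congr
        intro a _
        by_cases h1 : a ∈ ζ <;> by_cases h2 : a = m <;> simp [h1, h2]
      have hperm : (m :: l.erase m).Perm l := (List.perm_cons_erase hml).symm
      have := hperm.map (A.w ζ)
      simp only [List.map_cons] at this
      rw [← herase]
      exact this
    rw [key i hiζ hiD, key i' hi'ζ hi'D]
  | succ k ih =>
    intro ζ hroute hlen hall i i' hiζ hiD hi'ζ hi'D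
    by_cases hii : i = i'
    · rw [hii]
    have hlt : ζ.length < f := by omega
    have hsub : ζ.toFinset ⊆ D := fun x hx => hall x (List.mem_toFinset.mp hx)
    have hcT : (D ∩ ζ.toFinset).card = ζ.length := by
      rw [Finset.inter_eq_right.mpr hsub, List.toFinset_card_of_nodup hroute.1]
    have hlen1 : 1 ≤ ζ.length := hroute.2.2.1
    -- helper: for honest j ∉ ζ and honest verifier m ≠ j, the child value is w ζ j
    have hchild : ∀ j : Fin n, j ∉ ζ → j ∉ D → ∀ m : Fin n, m ∉ ζ → m ∉ D → m ≠ j →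
        gAux A k (ζ ++ [j]) m = A.w ζ j := by
      intro j hjζ hjD m hmζ hmD hmj
      have hroute' : IsRoute n f S (ζ ++ [j]) := route_extend hroute hlt hjζ
      have hmζ' : m ∉ ζ ++ [j] := by
        simp only [List.mem_append, List.mem_singleton]
        rintro (h | h)
        exacts [hmζ h, hmj h]
      have hpin' : ∀ x : Fin n, x ∉ ζ ++ [j] → x ∉ D → A.w (ζ ++ [j]) x = A.w ζ j := by
        intro x hx _
        exact A.A2 ζ j hroute hjζ hjD hroute' x hx
      refine ((mainPQ hnf hD A k (ζ ++ [j]) (A.w ζ j) hroute'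
        (by simp at hlen ⊢; omega) hpin' m hmζ' hmD).2 (honestPrimary_concat hjD) ?_)
      rw [inter_concat_of_not_mem hjD, hcT]
      simp only [List.length_append, List.length_singleton]
      omega
    show maj default _ = maj default _
    apply congrArg
    apply List.map_congr_left
    intro j hj
    have hjζ : j ∉ ζ := by
      have := (List.mem_filter.mp hj).2
      simpa using this
    by_cases hji : j = i
    · subst hji
      rw [if_pos rfl, if_neg hii]
      exact (hchild j hjζ hiD i' hi'ζ hi'D (Ne.symm hii)).symm
    · rw [if_neg hji]
      by_cases hji' : j = i'
      · subst hji'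
        rw [if_pos rfl]
        exact hchild j hjζ hi'D i hiζ hiD (Ne.symm hji)
      · rw [if_neg hji']
        by_cases hjD : j ∈ D
        · -- dishonest child: induction
          have hroute' : IsRoute n f S (ζ ++ [j]) := route_extend hroute hlt hjζ
          have hall' : ∀ x ∈ ζ ++ [j], x ∈ D := by
            intro x hx
            rcases List.mem_append.mp hx with h | h
            · exact hall x h
            · rw [List.mem_singleton.mp h]; exact hjD
          have hiζ' : i ∉ ζ ++ [j] := by
            simp only [List.mem_append, List.mem_singleton]
            rintro (h | h)
            exacts [hiζ h, hji h.symm]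
          have hi'ζ' : i' ∉ ζ ++ [j] := by
            simp only [List.mem_append, List.mem_singleton]
            rintro (h | h)
            exacts [hi'ζ h, hji' h.symm]
          exact ih (ζ ++ [j]) hroute' (by simp at hlen ⊢; omega) hall' i i' hiζ' hiD hi'ζ' hi'D
        · -- honest child: both equal w ζ j
          rw [hchild j hjζ hjD i hiζ hiD (Ne.symm hji),
            hchild j hjζ hjD i' hi'ζ hi'D (Ne.symm hji')]

end Main

/-- **Dishonest initial primary: identical root gathering lists.**
Assume `n ≥ 2f + 1`, the set `D` of dishonest players has exactly `f` elements, and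
the initial primary `S` is dishonest.  Then for every adversary assignment `(w, u)`
satisfying (A1)–(A4) and any two honest players `i, i'` distinct from `S`, the
depth-1 gathering lists of `i` and `i'` agree entrywise: for every player
`j ∉ {S, i, i'}` one has `g([S, j], i) = g([S, j], i')`, and moreover
`g([S, i], i') = w([S], i)` and `g([S, i'], i) = w([S], i')`.  Consequently all
honest players output the same value `g([S], i) = g([S], i')`.
(The depth-2 gathering values appearing here presuppose that depth-2 routes exist,
i.e. `2 ≤ f`.) -/
theorem dishonest_primary_identical_root_lists
    {n f : ℕ} {S : Fin n} {D : Finset (Fin n)} {M : Type*} [LinearOrder M] [Inhabited M]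
    (hn : 2 ≤ n) (hf : 2 ≤ f) (hnf : 2 * f + 1 ≤ n) (hD : D.card = f) (hS : S ∈ D)
    (A : Adversary n f S D M) (i i' : Fin n)
    (hiH : i ∉ D) (hi'H : i' ∉ D) (hiS : i ≠ S) (hi'S : i' ≠ S) (hii' : i ≠ i') :
    (∀ j : Fin n, j ≠ S → j ≠ i → j ≠ i' → g A [S, j] i = g A [S, j] i') ∧
    g A [S, i] i' = A.w [S] i ∧
    g A [S, i'] i = A.w [S] i' ∧
    g A [S] i = g A [S] i' := by

  classical
  have route0 : IsRoute n f S [S] := ⟨List.nodup_singleton S, rfl, by simp, by simp only [List.length_singleton]; omega⟩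
  have hiS' : i ≠ S := hiS
  have hbase : ∀ j : Fin n, j ≠ S → j ∉ D → ∀ m : Fin n, m ∉ D → m ≠ S → m ≠ j →
      gAux A (f - 2) ([S] ++ [j]) m = A.w [S] j := by
    intro j hjS hjD m hmD hmS hmj
    have hjζ : j ∉ [S] := by simp [hjS]
    have hroute' : IsRoute n f S ([S] ++ [j]) :=
      route_extend route0 (by simp only [List.length_singleton]; omega) hjζ
    have hmζ' : m ∉ [S] ++ [j] := by
      simp only [List.mem_append, List.mem_singleton]
      rintro (h | h)
      exacts [hmS h, hmj h]
    have hpin' : ∀ x : Fin n, x ∉ [S] ++ [j] → x ∉ D → A.w ([S] ++ [j]) x = A.w [S] j :=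
      fun x hx _ => A.A2 [S] j route0 hjζ hjD hroute' x hx
    have hc : (D ∩ (([S] ++ [j]).toFinset)).card = 1 := by
      rw [inter_concat_of_not_mem hjD]
      have h2 : D ∩ ([S] : List (Fin n)).toFinset = {S} := by
        ext x
        simp only [Finset.mem_inter, List.toFinset_cons, List.toFinset_nil,
          LawfulSingleton.insert_empty_eq, Finset.mem_singleton, List.mem_toFinset]
        constructor
        · rintro ⟨-, h⟩; exact h
        · rintro rfl; exact ⟨hS, rfl⟩
      rw [h2, Finset.card_singleton]
    exact (mainPQ hnf hD A (f - 2) ([S] ++ [j]) (A.w [S] j) hroute'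
      (by simp only [List.length_append, List.length_singleton]; omega)
      hpin' m hmζ' hmD).2 (honestPrimary_concat hjD)
      (by rw [hc]
          simp only [List.length_append, List.length_singleton]
          omega)
  refine ⟨?_, ?_, ?_, ?_⟩
  · intro j hjS hji hji'
    by_cases hjD : j ∈ D
    · have hjζ : j ∉ [S] := by simp [hjS]
      have hroute' : IsRoute n f S ([S] ++ [j]) :=
        route_extend route0 (by simp only [List.length_singleton]; omega) hjζ
      have hall : ∀ x ∈ ([S] ++ [j]), x ∈ D := by
        intro x hx
        rcases List.mem_append.mp hx with h | h
        · rw [List.mem_singleton.mp h]; exact hS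
        · rw [List.mem_singleton.mp h]; exact hjD
      have hiζ' : i ∉ [S] ++ [j] := by
        simp only [List.mem_append, List.mem_singleton]
        rintro (h | h)
        exacts [hiS h, hji h.symm]
      have hi'ζ' : i' ∉ [S] ++ [j] := by
        simp only [List.mem_append, List.mem_singleton]
        rintro (h | h)
        exacts [hi'S h, hji' h.symm]
      exact mainS hnf hD A (f - 2) ([S] ++ [j]) hroute'
        (by simp only [List.length_append, List.length_singleton]; omega)
        hall i i' hiζ' hiH hi'ζ' hi'H
    · have h1 := hbase j hjS hjD i hiH hiS (Ne.symm hji)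
      have h2 := hbase j hjS hjD i' hi'H hi'S (Ne.symm hji')
      show gAux A (f - 2) ([S] ++ [j]) i = gAux A (f - 2) ([S] ++ [j]) i'
      rw [h1, h2]
  · exact hbase i hiS hiH i' hi'H hi'S (Ne.symm hii')
  · exact hbase i' hi'S hi'H i hiH hiS hii'
  · have hiζ : i ∉ [S] := by simp [hiS]
    have hi'ζ : i' ∉ [S] := by simp [hi'S]
    exact mainS hnf hD A (f - 1) [S] route0 (by simp only [List.length_singleton]; omega)
      (by intro x hx; rw [List.mem_singleton.mp hx]; exact hS) i i' hiζ hiH hi'ζ hi'H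

end QBA
end

section
/- (Dishonest ending tree node case.) Let f ≥ 2 and let ζ ++ [p] be a route of depth f − 1 where p is dishonest and the primary of ζ is honest, and set m1 = w(ζ, p). Assume the honest backups of ζ ++ [p] strictly outnumber its dishonest backups. Then for every adversary assignment (w, u) satisfying (A1)-(A4) and every honest backup i of ζ ++ [p], one has g(ζ ++ [p], i) = m1. -/
namespace QBA

lemma maj_eq_of_count {M : Type*} [LinearOrder M] (d m1 : M) (L : List M)
    (h1 : m1 ∈ L) (h2 : ∀ m' ∈ L, m' ≠ m1 → L.count m' < L.count m1) :
    maj d L = m1 := by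
  have hmax : ∀ m' ∈ L.toFinset, L.count m' ≤ L.count m1 := by
    intro m' hm'
    rcases eq_or_ne m' m1 with rfl | hne
    · exact le_rfl
    · exact (h2 m' (List.mem_toFinset.mp hm') hne).le
  have hm1s : m1 ∈ L.toFinset.filter fun m => ∀ m' ∈ L.toFinset, L.count m' ≤ L.count m := by
    simp only [Finset.mem_filter, List.mem_toFinset]
    refine ⟨h1, fun m' hm' => hmax m' (List.mem_toFinset.mpr hm')⟩
  have hne : (L.toFinset.filter fun m => ∀ m' ∈ L.toFinset, L.count m' ≤ L.count m).Nonempty :=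
    ⟨m1, hm1s⟩
  rw [maj]
  simp only [dif_pos hne]
  apply le_antisymm (Finset.min'_le _ _ hm1s)
  have hmem := Finset.min'_mem _ hne
  set m := (L.toFinset.filter fun m => ∀ m' ∈ L.toFinset, L.count m' ≤ L.count m).min' hne
  simp only [Finset.mem_filter, List.mem_toFinset] at hmem
  by_contra hlt
  push_neg at hlt
  have : m ≠ m1 := ne_of_lt hlt
  exact absurd (hmem.2 m1 h1) (not_le.mpr (h2 m hmem.1 this))

lemma maj_const {M : Type*} [LinearOrder M] (d m : M) (L : List M)
    (hne : L ≠ []) (h : ∀ x ∈ L, x = m) : maj d L = m := by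
  apply maj_eq_of_count
  · obtain ⟨x, hx⟩ := List.exists_mem_of_ne_nil L hne
    exact (h x hx) ▸ hx
  · intro m' hm' hne'
    exact absurd (h m' hm') hne'

lemma countB {n : ℕ} (ζ' : List (Fin n)) (P : Fin n → Prop) [DecidablePred P] :
    (((List.finRange n).filter fun j => decide (j ∉ ζ')).countP fun j => decide (P j)) =
    (Finset.univ.filter fun j : Fin n => j ∉ ζ' ∧ P j).card := by
  rw [List.countP_eq_length_filter, List.filter_filter,
    ← List.toFinset_card_of_nodup ((List.nodup_finRange n).filter _)]
  congr 1
  ext x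
  simp [And.comm]

/-- **Dishonest ending tree node case.** Let `f ≥ 2` and let `ζ ++ [p]` be a route of
depth `f − 1` where `p` is dishonest and the primary of `ζ` is honest, and set
`m1 = w(ζ, p)`.  Assume the honest backups of `ζ ++ [p]` strictly outnumber its
dishonest backups.  Then for every adversary assignment `(w, u)` satisfying (A1)–(A4)
and every honest backup `i` of `ζ ++ [p]`, one has `g(ζ ++ [p], i) = m1 = w(ζ, p)`. -/
theorem dishonest_ending_node
    {n f : ℕ} {S : Fin n} {D : Finset (Fin n)} {M : Type*} [LinearOrder M] [Inhabited M]
    (hf : 2 ≤ f)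
    (A : Adversary n f S D M) (ζ : List (Fin n)) (p : Fin n)
    (hζ : IsRoute n f S ζ) (hprim : HonestPrimary D ζ) (hpD : p ∈ D)
    (hroute : IsRoute n f S (ζ ++ [p])) (hlen : (ζ ++ [p]).length = f - 1)
    (hmaj : (Finset.univ.filter fun j : Fin n => j ∉ ζ ++ [p] ∧ j ∈ D).card <
            (Finset.univ.filter fun j : Fin n => j ∉ ζ ++ [p] ∧ j ∉ D).card)
    (i : Fin n) (hi : i ∉ ζ ++ [p]) (hiH : i ∉ D) :
    g A (ζ ++ [p]) i = A.w ζ p := by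
  set ζ' := ζ ++ [p] with hζ'def
  have hpζ : p ∉ ζ := by
    have h := hroute.1
    rw [hζ'def, List.nodup_append] at h
    intro hmem
    exact h.2.2 p hmem p (by simp) rfl
  -- every honest backup j of ζ' gets value m1 in the outer list
  have hval : ∀ j : Fin n, j ∉ ζ' → j ∉ D →
      (if j = i then A.w ζ' i else gAux A 0 (ζ' ++ [j]) i) = A.w ζ p := by
    intro j hj hjD
    by_cases hji : j = i
    · subst hji
      rw [if_pos rfl]
      exact A.A3 ζ p hζ hprim hpζ hpD hroute j hj hjD
    · rw [if_neg hji]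
      -- ζ'' = ζ' ++ [j] is a route of depth f with honest primary j
      have hζ''nodup : (ζ' ++ [j]).Nodup := by
        rw [List.nodup_append]
        refine ⟨hroute.1, List.nodup_singleton j, fun a ha b hb => ?_⟩
        simp only [List.mem_singleton] at hb
        subst hb
        rintro rfl
        exact hj ha
      have hζ''head : (ζ' ++ [j]).head? = some S := by
        rw [List.head?_append, hroute.2.1]; rfl
      have hζ''len : (ζ' ++ [j]).length = f := by
        simp [List.length_append, hlen]; omega
      have hζ'' : IsRoute n f S (ζ' ++ [j]) :=
        ⟨hζ''nodup, hζ''head, by omega, by omega⟩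
      have hprim'' : HonestPrimary D (ζ' ++ [j]) := by
        intro q hq
        rw [List.getLast?_concat] at hq
        simp at hq
        exact hq ▸ hjD
      have hi'' : i ∉ ζ' ++ [j] := by
        simp only [List.mem_append, List.mem_singleton]
        push_neg
        exact ⟨hi, fun h => hji h.symm⟩
      have hw'' : A.w (ζ' ++ [j]) i = A.w ζ p := by
        rw [A.A2 ζ' j hroute hj hjD hζ'' i hi'']
        exact A.A3 ζ p hζ hprim hpζ hpD hroute j hj hjD
      rw [gAux]
      apply maj_const
      · simp
      · intro x hx
        simp only [List.mem_cons, List.mem_map, List.mem_filter] at hx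
        rcases hx with rfl | ⟨l, ⟨-, hl⟩, rfl⟩
        · exact hw''
        · simp only [decide_eq_true_eq] at hl
          obtain ⟨hl1, hl2⟩ := hl
          rw [A.A4 (ζ' ++ [j]) l i hζ'' hl1 hi'' hl2.symm (Or.inr hprim'')]
          rw [A.A1 (ζ' ++ [j]) hζ'' hprim'' l i hl1 hi'']
          exact hw''
  -- unfold g to the outer majority
  have hfuel : f - ζ'.length = 1 := by rw [hlen]; omega
  rw [g, hfuel]
  rw [show (1 : ℕ) = 0 + 1 from rfl, gAux]
  set B := (List.finRange n).filter fun j => decide (j ∉ ζ') with hB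
  set val : Fin n → M := fun j => if j = i then A.w ζ' i else gAux A 0 (ζ' ++ [j]) i with hvaldef
  have hmemB : ∀ j : Fin n, j ∈ B ↔ j ∉ ζ' := by
    intro j; simp [hB, List.mem_filter]
  have hcount : ∀ x : M, (B.map val).count x = B.countP fun j => decide (val j = x) := by
    intro x
    rw [List.count_eq_countP, List.countP_map]
    congr 1
  apply maj_eq_of_count
  · refine List.mem_map.mpr ⟨i, (hmemB i).mpr hi, ?_⟩
    simpa [hvaldef] using hval i hi hiH
  · intro m' hm' hne
    rw [hcount, hcount]
    calc (B.countP fun j => decide (val j = m'))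
        ≤ B.countP fun j => decide (j ∈ D) := by
          apply List.countP_mono_left
          intro j hjB h
          simp only [decide_eq_true_eq] at h ⊢
          by_contra hjD
          exact hne (h ▸ hval j ((hmemB j).mp hjB) hjD)
      _ = (Finset.univ.filter fun j : Fin n => j ∉ ζ' ∧ j ∈ D).card := countB ζ' _
      _ < (Finset.univ.filter fun j : Fin n => j ∉ ζ' ∧ j ∉ D).card := hmaj
      _ = B.countP fun j => decide (j ∉ D) := (countB ζ' _).symm
      _ ≤ B.countP fun j => decide (val j = A.w ζ p) := by
          apply List.countP_mono_left
          intro j hjB h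
          simp only [decide_eq_true_eq] at h ⊢
          exact hval j ((hmemB j).mp hjB) h


end QBA
end
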